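/- Suppose k = 2 (so m = 2n) and let s_1 and s_2 be agent a_1's most preferred and second most preferred items in I. There exists a recursively balanced policy under which agent a_1 receives exactly {s_1, s_2} if and only if the bipartite graph with vertex parts A ∖ {a_1} and I ∖ {s_1}, having an edge between agent a and item o exactly when a strictly prefers o to s_2, admits a matching that saturates A ∖ {a_1} (matches every agent other than a_1). -/

import Mathlib

open Finset
open scoped Classical

/-- The most preferred item of a nonempty finset w.r.t. a linear order
(greater means more preferred). -/
noncomputable def favorite {ι : Type} (L : LinearOrder ι) (S : Finset ι) (h : S.Nonempty) : ι :=
  @Finset.max' ι L S h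

/-- Sequential allocation: process the turns in order; at each turn the agent whose
turn it is picks her most preferred item among the items not yet allocated.
Returns the list of (agent, item) picks, in order. -/
noncomputable def seqAlloc {n : ℕ} {ι : Type} [DecidableEq ι]
    (P : Fin n → LinearOrder ι) : List (Fin n) → Finset ι → List (Fin n × ι)
  | [], _ => []
  | a :: rest, S =>
    if h : S.Nonempty then
      (a, favorite (P a) S h) :: seqAlloc P rest (S.erase (favorite (P a) S h))
    else []

/-- `M` is the outcome of the policy `π`: every item is picked by the agent that
`M` assigns it to. -/
def IsOutcome {n : ℕ} {ι : Type} [Fintype ι] [DecidableEq ι]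
    (P : Fin n → LinearOrder ι) (π : List (Fin n)) (M : ι → Fin n) : Prop :=
  ∀ o : ι, (M o, o) ∈ seqAlloc P π Finset.univ

/-- The set of items that agent `a` picks under the policy `π`. -/
noncomputable def receives {n : ℕ} {ι : Type} [Fintype ι] [DecidableEq ι]
    (P : Fin n → LinearOrder ι) (π : List (Fin n)) (a : Fin n) : Finset ι :=
  Finset.univ.filter (fun o => (a, o) ∈ seqAlloc P π Finset.univ)

/-- An allocation `M` is Pareto optimal if there is no bijection `f` of the items such
that every agent weakly prefers `f o` to `o` for each item `o` she gets, with at least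
one strict preference. -/
def ParetoOptimal {n : ℕ} {ι : Type} (P : Fin n → LinearOrder ι) (M : ι → Fin n) : Prop :=
  ¬ ∃ f : ι ≃ ι, (∀ o : ι, (P (M o)).le o (f o)) ∧ (∃ o : ι, (P (M o)).lt o (f o))

/-- A policy is balanced if every agent has exactly `k` turns. -/
def BalancedPolicy {n : ℕ} (k : ℕ) (π : List (Fin n)) : Prop :=
  ∀ a : Fin n, π.count a = k

/-- An allocation is balanced if every agent receives exactly `k` items. -/
def BalancedAlloc {n : ℕ} {ι : Type} [Fintype ι] (k : ℕ) (M : ι → Fin n) : Prop :=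
  ∀ a : Fin n, (Finset.univ.filter (fun o => M o = a)).card = k

/-- A policy is recursively balanced if it splits into `k` consecutive rounds of `n`
turns each, every agent having exactly one turn in each round. -/
def RecBalanced (n k : ℕ) (π : List (Fin n)) : Prop :=
  ∃ rounds : List (List (Fin n)), rounds.length = k ∧
    (∀ r ∈ rounds, r.length = n ∧ ∀ a : Fin n, r.count a = 1) ∧
    π = rounds.flatten

/-- A strict alternation policy: every one of the `k` rounds uses the same order `σ`
over the agents. -/
def StrictAlt (n k : ℕ) (π : List (Fin n)) : Prop :=
  ∃ σ : List (Fin n), σ.length = n ∧ (∀ a : Fin n, σ.count a = 1) ∧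
    π = (List.replicate k σ).flatten

/-- A balanced alternation policy: odd-numbered rounds use the order `σ` over the agents
and even-numbered rounds use its reverse. -/
def BalAlt (n k : ℕ) (π : List (Fin n)) : Prop :=
  ∃ σ : List (Fin n), σ.length = n ∧ (∀ a : Fin n, σ.count a = 1) ∧
    π = ((List.range k).map (fun r => if r % 2 = 0 then σ else σ.reverse)).flatten

/-- `p j i` (for `1 ≤ i ≤ k`) is the item ranked `i`-th by agent `j` among the items `M`
allocates to `j`: it is allocated to `j`, and exactly `i - 1` of the items allocated
to `j` are strictly preferred to it by agent `j`. -/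
def IsRankingOf {n : ℕ} {ι : Type} [Fintype ι] (P : Fin n → LinearOrder ι) (k : ℕ)
    (M : ι → Fin n) (p : Fin n → ℕ → ι) : Prop :=
  ∀ (j : Fin n) (i : ℕ), 1 ≤ i → i ≤ k →
    M (p j i) = j ∧
    (Finset.univ.filter (fun o => M o = j ∧ (P j).lt (p j i) o)).card = i - 1

/-- Condition 3: for all `1 ≤ t < s ≤ k` and all agents `j, j'`, agent `j` strictly
prefers `p j t` to `p j' s`. -/
def Cond3 {n : ℕ} {ι : Type} (P : Fin n → LinearOrder ι) (k : ℕ) (p : Fin n → ℕ → ι) : Prop :=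
  ∀ t s : ℕ, 1 ≤ t → t < s → s ≤ k → ∀ j j' : Fin n, (P j).lt (p j' s) (p j t)

/-- The edge relation of the directed graph `G_M`: for odd `i ≤ k` an edge `a → b`
whenever `b` strictly prefers `p a i` to `p b i`, and for even `i ≤ k` an edge `a → b`
whenever `a` strictly prefers `p b i` to `p a i`. -/
def GM {n : ℕ} {ι : Type} (P : Fin n → LinearOrder ι) (k : ℕ) (p : Fin n → ℕ → ι)
    (a b : Fin n) : Prop :=
  (∃ i : ℕ, 1 ≤ i ∧ i ≤ k ∧ i % 2 = 1 ∧ (P b).lt (p b i) (p a i)) ∨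
  (∃ i : ℕ, 1 ≤ i ∧ i ≤ k ∧ i % 2 = 0 ∧ (P a).lt (p a i) (p b i))

/-- The edge relation of the directed graph `H_M`: for each `i ≤ k` an edge `a → b`
whenever `b` strictly prefers `p a i` to `p b i`. -/
def HM {n : ℕ} {ι : Type} (P : Fin n → LinearOrder ι) (k : ℕ) (p : Fin n → ℕ → ι)
    (a b : Fin n) : Prop :=
  ∃ i : ℕ, 1 ≤ i ∧ i ≤ k ∧ (P b).lt (p b i) (p a i)

/-- The `k` most preferred items of agent `j`: those items with fewer than `k` items
strictly preferred to them by `j`. -/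
noncomputable def topItems {n : ℕ} {ι : Type} [Fintype ι] (P : Fin n → LinearOrder ι)
    (k : ℕ) (j : Fin n) : Finset ι :=
  Finset.univ.filter (fun o => (Finset.univ.filter (fun o' => (P j).lt o o')).card < k)

/-- The rank of item `o` in agent `j`'s preference (the most preferred item has rank 1). -/
noncomputable def rankOf {n : ℕ} {ι : Type} [Fintype ι] (P : Fin n → LinearOrder ι)
    (j : Fin n) (o : ι) : ℕ :=
  (Finset.univ.filter (fun o' => (P j).lt o o')).card + 1
section Helpers

variable {ι : Type} [DecidableEq ι] {n : ℕ} (P : Fin n → LinearOrder ι)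


theorem favorite_mem {ι : Type} (L : LinearOrder ι) (S : Finset ι) (h : S.Nonempty) :
    favorite L S h ∈ S := @Finset.max'_mem ι L S h

theorem le_favorite {ι : Type} (L : LinearOrder ι) (S : Finset ι) (h : S.Nonempty)
    (x : ι) (hx : x ∈ S) : L.le x (favorite L S h) := @Finset.le_max' ι L S x hx

theorem card_erase_favorite {ι : Type} [DecidableEq ι] (L : LinearOrder ι) (S : Finset ι)
    (h : S.Nonempty) : (S.erase (favorite L S h)).card = S.card - 1 :=
  Finset.card_erase_of_mem (favorite_mem L S h)

theorem seqAlloc_nil (S : Finset ι) : seqAlloc P [] S = [] := by simp [seqAlloc]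

theorem seqAlloc_cons (a : Fin n) (rest : List (Fin n)) (S : Finset ι) (h : S.Nonempty) :
    seqAlloc P (a :: rest) S =
      (a, favorite (P a) S h) :: seqAlloc P rest (S.erase (favorite (P a) S h)) := by
  simp [seqAlloc, h]

theorem seqAlloc_length : ∀ (π : List (Fin n)) (S : Finset ι), π.length ≤ S.card →
    (seqAlloc P π S).length = π.length := by
  intro π
  induction π with
  | nil => intro S _; simp [seqAlloc]
  | cons a rest ih =>
    intro S hS
    have hne : S.Nonempty := Finset.card_pos.mp (lt_of_lt_of_le (Nat.succ_pos _) (by simpa using hS))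
    rw [seqAlloc_cons P a rest S hne]
    have hcard : rest.length ≤ (S.erase (favorite (P a) S hne)).card := by
      rw [card_erase_favorite]
      simp only [List.length_cons] at hS
      omega
    simp [ih _ hcard]

theorem seqAlloc_fst_mem : ∀ (π : List (Fin n)) (S : Finset ι) (p : Fin n × ι),
    p ∈ seqAlloc P π S → p.1 ∈ π := by
  intro π
  induction π with
  | nil => intro S p hp; simp [seqAlloc] at hp
  | cons a rest ih =>
    intro S p hp
    by_cases hne : S.Nonempty
    · rw [seqAlloc_cons P a rest S hne] at hp
      rcases List.mem_cons.mp hp with h | h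
      · simp [h]
      · exact List.mem_cons_of_mem _ (ih _ _ h)
    · simp [seqAlloc, hne] at hp

theorem seqAlloc_snd_mem : ∀ (π : List (Fin n)) (S : Finset ι) (p : Fin n × ι),
    p ∈ seqAlloc P π S → p.2 ∈ S := by
  intro π
  induction π with
  | nil => intro S p hp; simp [seqAlloc] at hp
  | cons a rest ih =>
    intro S p hp
    by_cases hne : S.Nonempty
    · rw [seqAlloc_cons P a rest S hne] at hp
      rcases List.mem_cons.mp hp with h | h
      · rw [h]; exact favorite_mem (P a) S hne
      · exact Finset.mem_of_mem_erase (ih _ _ h)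
    · simp [seqAlloc, hne] at hp

theorem seqAlloc_snd_nodup : ∀ (π : List (Fin n)) (S : Finset ι),
    ((seqAlloc P π S).map Prod.snd).Nodup := by
  intro π
  induction π with
  | nil => intro S; simp [seqAlloc]
  | cons a rest ih =>
    intro S
    by_cases hne : S.Nonempty
    · rw [seqAlloc_cons P a rest S hne]
      simp only [List.map_cons, List.nodup_cons]
      refine ⟨?_, ih _⟩
      intro hmem
      rcases List.mem_map.mp hmem with ⟨p, hp, hp2⟩
      have := seqAlloc_snd_mem P rest _ p hp
      rw [hp2] at this
      exact (Finset.notMem_erase _ _) this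
    · simp [seqAlloc, hne]

theorem seqAlloc_fst_map : ∀ (π : List (Fin n)) (S : Finset ι), π.length ≤ S.card →
    (seqAlloc P π S).map Prod.fst = π := by
  intro π
  induction π with
  | nil => intro S _; simp [seqAlloc]
  | cons a rest ih =>
    intro S hS
    have hne : S.Nonempty := Finset.card_pos.mp (lt_of_lt_of_le (Nat.succ_pos _) (by simpa using hS))
    rw [seqAlloc_cons P a rest S hne]
    have hcard : rest.length ≤ (S.erase (favorite (P a) S hne)).card := by
      rw [card_erase_favorite]
      simp only [List.length_cons] at hS
      omega
    simp [ih _ hcard]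

/-- Key invariant: each pick is weakly preferred (by the picker) to every item of `S`
not picked earlier. -/
theorem seqAlloc_pick_best : ∀ (π : List (Fin n)) (S : Finset ι) (i : ℕ)
    (hi : i < (seqAlloc P π S).length), ∀ x ∈ S,
    x ∉ ((seqAlloc P π S).map Prod.snd).take i →
    (P ((seqAlloc P π S)[i]).1).le x ((seqAlloc P π S)[i]).2 := by
  intro π
  induction π with
  | nil => intro S i hi; simp [seqAlloc] at hi
  | cons a rest ih =>
    intro S i hi x hx hxt
    by_cases hne : S.Nonempty
    · simp only [seqAlloc_cons P a rest S hne] at hi hxt ⊢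
      match i with
      | 0 =>
        have hq : (seqAlloc P (a :: rest) S)[0].1 = a := by simp [seqAlloc_cons P a rest S hne]
        rw [hq]
        simpa using le_favorite (P a) S hne x hx
      | (j+1) =>
        simp only [List.map_cons, List.take_succ_cons, List.mem_cons, not_or] at hxt
        have hxe : x ∈ S.erase (favorite (P a) S hne) :=
          Finset.mem_erase.mpr ⟨hxt.1, hx⟩
        simp only [List.length_cons, Nat.add_lt_add_iff_right] at hi
        have hq : ((seqAlloc P (a :: rest) S)[j+1]'(by
            rw [seqAlloc_cons P a rest S hne]; simpa using hi)).1 =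
            ((seqAlloc P rest (S.erase (favorite (P a) S hne)))[j]'hi).1 := by
          simp [seqAlloc_cons P a rest S hne]
        rw [hq]
        simpa using ih (S.erase (favorite (P a) S hne)) j hi x hxe hxt.2
    · simp [seqAlloc, hne] at hi

theorem seqAlloc_append : ∀ (π₁ π₂ : List (Fin n)) (S : Finset ι), π₁.length ≤ S.card →
    seqAlloc P (π₁ ++ π₂) S =
      seqAlloc P π₁ S ++
        seqAlloc P π₂ (S \ ((seqAlloc P π₁ S).map Prod.snd).toFinset) := by
  intro π₁
  induction π₁ with
  | nil => intro π₂ S _; simp [seqAlloc]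
  | cons a rest ih =>
    intro π₂ S hS
    have hne : S.Nonempty := Finset.card_pos.mp (lt_of_lt_of_le (Nat.succ_pos _) (by simpa using hS))
    have hcard : rest.length ≤ (S.erase (favorite (P a) S hne)).card := by
      rw [card_erase_favorite]
      simp only [List.length_cons] at hS
      omega
    set o := favorite (P a) S hne with ho
    set T := ((seqAlloc P rest (S.erase o)).map Prod.snd).toFinset with hT
    have hset : S.erase o \ T = S \ insert o T := by
      ext y
      simp only [Finset.mem_sdiff, Finset.mem_erase, Finset.mem_insert]
      tauto
    rw [List.cons_append, seqAlloc_cons P a (rest ++ π₂) S hne,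
      seqAlloc_cons P a rest S hne, ih π₂ _ hcard, List.cons_append, List.map_cons,
      List.toFinset_cons, hset]

end Helpers

section OrderHelpers

variable {ι : Type}

theorem Lhelp.lt_of_le_of_ne (L : LinearOrder ι) {x y : ι} (h1 : L.le x y) (h2 : x ≠ y) :
    L.lt x y := by letI := L; exact _root_.lt_of_le_of_ne h1 h2

theorem Lhelp.ne_of_lt (L : LinearOrder ι) {x y : ι} (h : L.lt x y) : x ≠ y := by
  letI := L; exact _root_.ne_of_lt h

theorem Lhelp.ne_of_gt (L : LinearOrder ι) {x y : ι} (h : L.lt x y) : y ≠ x := by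
  letI := L; exact _root_.ne_of_gt h

theorem Lhelp.le_antisymm (L : LinearOrder ι) {x y : ι} (h1 : L.le x y) (h2 : L.le y x) :
    x = y := by letI := L; exact _root_.le_antisymm h1 h2

theorem Lhelp.lt_of_lt_of_le (L : LinearOrder ι) {x y z : ι} (h1 : L.lt x y) (h2 : L.le y z) :
    L.lt x z := by letI := L; exact _root_.lt_of_lt_of_le h1 h2

theorem Lhelp.lt_trans (L : LinearOrder ι) {x y z : ι} (h1 : L.lt x y) (h2 : L.lt y z) :
    L.lt x z := by letI := L; exact _root_.lt_trans h1 h2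

theorem Lhelp.lt_irrefl (L : LinearOrder ι) {x : ι} (h : L.lt x x) : False := by
  letI := L; exact _root_.lt_irrefl x h

end OrderHelpers

section Ordering

variable {ι : Type} [Fintype ι] [DecidableEq ι] {n : ℕ}

/-- Strict monotonicity of the number of items below a given item. -/
theorem height_lt_height (L : LinearOrder ι) [Fintype ι] {x y : ι} (h : L.lt x y) :
    (Finset.univ.filter (fun z => L.lt z x)).card <
      (Finset.univ.filter (fun z => L.lt z y)).card := by
  apply Finset.card_lt_card
  constructor
  · intro z hz
    simp only [Finset.mem_filter, Finset.mem_univ, true_and] at hz ⊢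
    exact Lhelp.lt_trans L hz h
  · intro hsub
    have hx : x ∈ Finset.univ.filter (fun z => L.lt z y) := by
      simp only [Finset.mem_filter, Finset.mem_univ, true_and]; exact h
    have := hsub hx
    simp only [Finset.mem_filter, Finset.mem_univ, true_and] at this
    exact Lhelp.lt_irrefl L this

/-- Key combinatorial lemma: given a system of distinct representatives (each agent in `R`
matched to an item in `S` she strictly prefers to `s2`), there is an ordering of the agents
in `R` such that sequential allocation from `S` never allocates `s2`. -/
theorem exists_good_order (P : Fin n → LinearOrder ι) (s2 : ι) :
    ∀ (k : ℕ) (R : Finset (Fin n)) (S : Finset ι), R.card = k → R.card ≤ S.card → s2 ∈ S →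
    (∃ f : Fin n → ι, Set.InjOn f ↑R ∧ ∀ a ∈ R, f a ∈ S ∧ (P a).lt s2 (f a)) →
    ∃ σ : List (Fin n), σ.Nodup ∧ σ.toFinset = R ∧
      ∀ p ∈ seqAlloc P σ S, p.2 ≠ s2 := by
  intro k
  induction k with
  | zero =>
    intro R S hR _ _ _
    refine ⟨[], List.nodup_nil, ?_, by simp [seqAlloc]⟩
    simpa using (Finset.card_eq_zero.mp hR).symm
  | succ k ih =>
    intro R S hR hRS hs2 hf0
    have hSne : S.Nonempty := ⟨s2, hs2⟩
    -- the set of valid matchings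
    set Q : (Fin n → ι) → Prop := fun f =>
      Set.InjOn f ↑R ∧ ∀ a ∈ R, f a ∈ S ∧ (P a).lt s2 (f a) with hQ
    set V : Finset (Fin n → ι) := Finset.univ.filter Q with hV
    have hVne : V.Nonempty := by
      obtain ⟨f, hf⟩ := hf0
      exact ⟨f, by simp only [hV, Finset.mem_filter]; exact ⟨Finset.mem_univ _, hf⟩⟩
    set W : (Fin n → ι) → ℕ := fun f =>
      ∑ a ∈ R, (Finset.univ.filter (fun z => (P a).lt z (f a))).card with hWdef
    obtain ⟨f, hfV, hfmax⟩ := Finset.exists_max_image V W hVne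
    have hfQ : Q f := (Finset.mem_filter.mp hfV).2
    have hfinj : Set.InjOn f ↑R := hfQ.1
    have hfS : ∀ a ∈ R, f a ∈ S := fun a ha => (hfQ.2 a ha).1
    have hflt : ∀ a ∈ R, (P a).lt s2 (f a) := fun a ha => (hfQ.2 a ha).2
    -- there is an agent whose favorite is not another agent's matched item
    have hgood : ∃ a ∈ R, ∀ b ∈ R, b ≠ a → f b ≠ favorite (P a) S hSne := by
      by_contra hno
      push_neg at hno
      have hno' : ∀ a : Fin n, ∃ b : Fin n,
          a ∈ R → b ∈ R ∧ b ≠ a ∧ f b = favorite (P a) S hSne := by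
        intro a
        by_cases ha : a ∈ R
        · obtain ⟨b, hb1, hb2, hb3⟩ := hno a ha
          exact ⟨b, fun _ => ⟨hb1, hb2, hb3⟩⟩
        · exact ⟨a, fun h => absurd h ha⟩
      choose h hh using hno'
      obtain ⟨a₀, ha₀⟩ := Finset.card_pos.mp (by omega : 0 < R.card)
      have horb : ∀ l : ℕ, h^[l] a₀ ∈ R := by
        intro l
        induction l with
        | zero => simpa using ha₀
        | succ l ihl =>
          rw [Function.iterate_succ_apply']
          exact (hh _ ihl).1
      have hkey : ∀ i j : ℕ, i < j → h^[i] a₀ = h^[j] a₀ → False := by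
        intro i j hij hije
        set c := h^[i] a₀ with hc
        set p := j - i with hp
        have hp0 : 0 < p := by omega
        have hcyc : h^[p] c = c := by
          rw [hc, ← Function.iterate_add_apply]
          have hpi : p + i = j := by omega
          rw [hpi, ← hije]
        have horbc : ∀ l : ℕ, h^[l] c ∈ R := fun l => by
          rw [hc, ← Function.iterate_add_apply]; exact horb _
        set C : Finset (Fin n) := (Finset.range p).image (fun l => h^[l] c) with hC
        have hcC : c ∈ C :=
          Finset.mem_image.mpr ⟨0, Finset.mem_range.mpr hp0, rfl⟩
        have hCR : C ⊆ R := by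
          intro b hb
          obtain ⟨l, _, rfl⟩ := Finset.mem_image.mp hb
          exact horbc l
        have hmaps : ∀ b ∈ C, h b ∈ C := by
          intro b hb
          obtain ⟨l, hl, hbl⟩ := Finset.mem_image.mp hb
          rw [Finset.mem_range] at hl
          have hbl' : h^[l] c = b := hbl
          have hstep : h b = h^[l + 1] c := by
            rw [Function.iterate_succ_apply' h l c, hbl']
          rcases Nat.lt_or_ge (l + 1) p with h1 | h1
          · rw [hstep]
            exact Finset.mem_image.mpr ⟨l + 1, Finset.mem_range.mpr h1, rfl⟩
          · have hl1 : l + 1 = p := by omega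
            rw [hstep, hl1, hcyc]
            exact hcC
        have hsurj : ∀ b ∈ C, ∃ a, ∃ (ha : a ∈ C), (fun a (_ : a ∈ C) => h a) a ha = b := by
          intro b hb
          obtain ⟨l, hl, hbl⟩ := Finset.mem_image.mp hb
          rw [Finset.mem_range] at hl
          have hbl' : h^[l] c = b := hbl
          rcases Nat.eq_zero_or_pos l with rfl | hl0
          · have hb0 : b = c := by simpa using hbl'.symm
            refine ⟨h^[p - 1] c,
              Finset.mem_image.mpr ⟨p - 1, Finset.mem_range.mpr (by omega), rfl⟩, ?_⟩
            show h (h^[p - 1] c) = b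
            have hps : p - 1 + 1 = p := by omega
            rw [hb0]
            conv_rhs => rw [← hcyc, ← hps]
            rw [Function.iterate_succ_apply' h (p - 1) c]
          · refine ⟨h^[l - 1] c,
              Finset.mem_image.mpr ⟨l - 1, Finset.mem_range.mpr (by omega), rfl⟩, ?_⟩
            show h (h^[l - 1] c) = b
            have hls : l - 1 + 1 = l := by omega
            rw [← hbl']
            conv_rhs => rw [← hls]
            rw [Function.iterate_succ_apply' h (l - 1) c]
        have hinjC : ∀ ⦃a₁⦄, a₁ ∈ C → ∀ ⦃a₂⦄, a₂ ∈ C → h a₁ = h a₂ → a₁ = a₂ :=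
          Finset.inj_on_of_surj_on_of_card_le (fun a _ => h a) (fun a ha => hmaps a ha)
            hsurj le_rfl
        set f' : Fin n → ι := fun x => if x ∈ C then f (h x) else f x with hf'
        have hhC : ∀ a ∈ C, h a ∈ R := fun a ha => hCR (hmaps a ha)
        have hfav : ∀ a ∈ C, f' a = favorite (P a) S hSne := by
          intro a ha
          simp only [hf', if_pos ha]
          exact (hh a (hCR ha)).2.2
        have hf'lt : ∀ a ∈ C, (P a).lt (f a) (f' a) := by
          intro a ha
          have haR := hCR ha
          have h1 : (P a).le (f a) (favorite (P a) S hSne) :=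
            le_favorite _ _ _ _ (hfS a haR)
          have h2 : f a ≠ favorite (P a) S hSne := by
            intro he
            have he2 : f (h a) = f a := by rw [(hh a haR).2.2, he]
            have := hfinj (Finset.mem_coe.mpr ((hh a haR).1)) (Finset.mem_coe.mpr haR) he2
            exact (hh a haR).2.1 this
          rw [hfav a ha]
          exact Lhelp.lt_of_le_of_ne (P a) h1 h2
        have hf'Q : Q f' := by
          constructor
          · intro x hx y hy hxy
            simp only [hf'] at hxy
            by_cases hxC : x ∈ C <;> by_cases hyC : y ∈ C
            · rw [if_pos hxC, if_pos hyC] at hxy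
              exact hinjC hxC hyC
                (hfinj (Finset.mem_coe.mpr (hhC x hxC)) (Finset.mem_coe.mpr (hhC y hyC)) hxy)
            · rw [if_pos hxC, if_neg hyC] at hxy
              have := hfinj (Finset.mem_coe.mpr (hhC x hxC)) hy hxy
              exact absurd (this ▸ hmaps x hxC) hyC
            · rw [if_neg hxC, if_pos hyC] at hxy
              have := hfinj hx (Finset.mem_coe.mpr (hhC y hyC)) hxy
              exact absurd (this ▸ hmaps y hyC) hxC
            · rw [if_neg hxC, if_neg hyC] at hxy
              exact hfinj hx hy hxy
          · intro a ha
            by_cases haC : a ∈ C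
            · refine ⟨?_, ?_⟩
              · simp only [hf', if_pos haC]
                exact hfS _ (hhC a haC)
              · exact Lhelp.lt_trans (P a) (hflt a ha) (hf'lt a haC)
            · simp only [hf', if_neg haC]
              exact ⟨hfS a ha, hflt a ha⟩
        have hWlt : W f < W f' := by
          apply Finset.sum_lt_sum
          · intro a ha
            by_cases haC : a ∈ C
            · exact le_of_lt (height_lt_height (P a) (hf'lt a haC))
            · simp only [hf', if_neg haC]
              exact le_rfl
          · exact ⟨c, hCR hcC, height_lt_height (P c) (hf'lt c hcC)⟩
        have := hfmax f' (Finset.mem_filter.mpr ⟨Finset.mem_univ _, hf'Q⟩)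
        omega
      obtain ⟨i, hi, j, hj, hij, hije⟩ :=
        Finset.exists_ne_map_eq_of_card_lt_of_maps_to
          (s := Finset.range (k + 2)) (t := R)
          (by rw [Finset.card_range]; omega)
          (fun l _ => horb l)
      rcases Nat.lt_or_ge i j with hlt | hge
      · exact hkey i j hlt hije
      · exact hkey j i (by omega) hije.symm
    obtain ⟨a, haR, hgooda⟩ := hgood
    set x := favorite (P a) S hSne with hxdef
    have hxS : x ∈ S := favorite_mem _ _ _
    have hs2x : (P a).lt s2 x :=
      Lhelp.lt_of_lt_of_le (P a) (hflt a haR) (le_favorite _ _ _ _ (hfS a haR))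
    have hs2x' : s2 ≠ x := Lhelp.ne_of_lt (P a) hs2x
    obtain ⟨σ', hnd, htf, hpick⟩ := ih (R.erase a) (S.erase x)
      (by rw [Finset.card_erase_of_mem haR]; omega)
      (by rw [Finset.card_erase_of_mem haR, Finset.card_erase_of_mem hxS]; omega)
      (Finset.mem_erase.mpr ⟨hs2x', hs2⟩)
      ⟨f, hfinj.mono (Finset.coe_subset.mpr (Finset.erase_subset _ _)), fun b hb => by
        have hbR := Finset.mem_of_mem_erase hb
        have hba := (Finset.mem_erase.mp hb).1
        exact ⟨Finset.mem_erase.mpr ⟨hgooda b hbR hba, hfS b hbR⟩, hflt b hbR⟩⟩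
    refine ⟨a :: σ', ?_, ?_, ?_⟩
    · refine List.nodup_cons.mpr ⟨?_, hnd⟩
      intro hmem
      have : a ∈ R.erase a := htf ▸ List.mem_toFinset.mpr hmem
      exact (Finset.mem_erase.mp this).1 rfl
    · rw [List.toFinset_cons, htf, Finset.insert_erase haR]
    · intro q hq
      rw [seqAlloc_cons P a σ' S hSne] at hq
      rcases List.mem_cons.mp hq with rfl | hq
      · exact Lhelp.ne_of_gt (P a) hs2x
      · exact hpick q hq

end Ordering

/-- For `k = 2`, with `s1, s2` agent `a_1`'s top two items, there is a
recursively balanced policy giving `a_1` exactly `{s1, s2}` iff the bipartite graph on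
`A \ {a_1}` and `I \ {s1}` joining `a` to `o` when `a` strictly prefers `o` to `s2`
admits a matching saturating `A \ {a_1}`. -/
theorem top2_possible_set_recursively_balanced
    {ι : Type} [Fintype ι] [DecidableEq ι] {n : ℕ} (hn : 0 < n)
    (hcard : Fintype.card ι = 2 * n)
    (P : Fin n → LinearOrder ι) (a1 : Fin n) (s1 s2 : ι)
    (hs1 : ∀ x : ι, (P a1).le x s1)
    (hs2ne : s2 ≠ s1) (hs2 : ∀ x : ι, x ≠ s1 → (P a1).le x s2) :
    (∃ π : List (Fin n), RecBalanced n 2 π ∧ receives P π a1 = {s1, s2}) ↔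
      ∃ f : Fin n → ι, Set.InjOn f {a : Fin n | a ≠ a1} ∧
        ∀ a : Fin n, a ≠ a1 → f a ≠ s1 ∧ (P a).lt s2 (f a) := by
  constructor
  · -- forward direction
    rintro ⟨π, ⟨rounds, hlen2, hrounds, rfl⟩, hrec⟩
    obtain ⟨r1, r2, rfl⟩ := List.length_eq_two.mp hlen2
    have hr1 := hrounds r1 (by simp)
    have hr2 := hrounds r2 (by simp)
    simp only [List.flatten_cons, List.flatten_nil, List.append_nil] at hrec
    set π := r1 ++ r2 with hπ
    have hlen1 : r1.length = n := hr1.1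
    have hlen2' : r2.length = n := hr2.1
    have hπlen : π.length = 2 * n := by
      rw [hπ, List.length_append, hlen1, hlen2']; omega
    have hcardu : π.length ≤ (Finset.univ : Finset ι).card := by
      rw [Finset.card_univ, hcard, hπlen]
    have hfst : (seqAlloc P π Finset.univ).map Prod.fst = π := seqAlloc_fst_map P π _ hcardu
    have hnodup : ((seqAlloc P π Finset.univ).map Prod.snd).Nodup := seqAlloc_snd_nodup P π _
    have hlenL : (seqAlloc P π Finset.univ).length = π.length := seqAlloc_length P π _ hcardu
    have hmem : ∀ o : ι, ((a1, o) ∈ seqAlloc P π Finset.univ ↔ (o = s1 ∨ o = s2)) := by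
      intro o
      rw [Finset.ext_iff] at hrec
      have h := hrec o
      simpa [receives] using h
    have hsnd_inj : ∀ (j j' : ℕ) (hj : j < (seqAlloc P π Finset.univ).length)
        (hj' : j' < (seqAlloc P π Finset.univ).length),
        (seqAlloc P π Finset.univ)[j].2 = (seqAlloc P π Finset.univ)[j'].2 → j = j' := by
      intro j j' hj hj' he
      have h1 : ((seqAlloc P π Finset.univ).map Prod.snd)[j]'(by simpa using hj) =
          ((seqAlloc P π Finset.univ).map Prod.snd)[j']'(by simpa using hj') := by
        rw [List.getElem_map, List.getElem_map]; exact he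
      exact (List.Nodup.getElem_inj_iff hnodup).mp h1
    have hfst_at : ∀ (j : ℕ) (hj : j < (seqAlloc P π Finset.univ).length)
        (hj2 : j < π.length), (seqAlloc P π Finset.univ)[j].1 = π[j] := by
      intro j hj hj2
      have h1 : ((seqAlloc P π Finset.univ).map Prod.fst)[j]? = π[j]? := by rw [hfst]
      rw [List.getElem?_eq_getElem (by simpa using hj), List.getElem?_eq_getElem hj2] at h1
      have h2 := Option.some.inj h1
      rw [List.getElem_map] at h2
      exact h2
    have htake : ∀ (x : ι) (i : ℕ), x ∈ (List.map Prod.snd (seqAlloc P π Finset.univ)).take i →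
        ∃ j, j < i ∧ ∃ (hj : j < (seqAlloc P π Finset.univ).length),
          (seqAlloc P π Finset.univ)[j].2 = x := by
      intro x i hx
      obtain ⟨l, hl, hle⟩ := List.mem_iff_getElem.mp hx
      rw [List.getElem_take] at hle
      have hl' : l < i ∧ l < (seqAlloc P π Finset.univ).length := by
        rw [List.length_take, List.length_map] at hl
        omega
      refine ⟨l, hl'.1, hl'.2, ?_⟩
      rw [List.getElem_map] at hle
      exact hle
    have hndr1 : r1.Nodup := List.nodup_iff_count_le_one.mpr (fun a => le_of_eq (hr1.2 a))
    have hndr2 : r2.Nodup := List.nodup_iff_count_le_one.mpr (fun a => le_of_eq (hr2.2 a))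
    have ha1r1 : a1 ∈ r1 := List.count_pos_iff.mp (by rw [hr1.2 a1]; omega)
    have ha1r2 : a1 ∈ r2 := List.count_pos_iff.mp (by rw [hr2.2 a1]; omega)
    obtain ⟨i1, hi1, hri1⟩ := List.mem_iff_getElem.mp ha1r1
    obtain ⟨i2', hi2', hri2⟩ := List.mem_iff_getElem.mp ha1r2
    have hi1n : i1 < n := by omega
    have hi2n : i2' < n := by omega
    have hπi1 : ∀ (hj : i1 < π.length), π[i1] = a1 := by
      intro hj
      have h0 : π[i1]? = some a1 := by
        rw [hπ, List.getElem?_append_left hi1, List.getElem?_eq_getElem hi1, hri1]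
      rw [List.getElem?_eq_getElem hj] at h0
      exact Option.some.inj h0
    have hπi2 : ∀ (hj : n + i2' < π.length), π[n + i2'] = a1 := by
      intro hj
      have h0 : π[n + i2']? = some a1 := by
        rw [hπ, List.getElem?_append_right (by omega)]
        have h3 : n + i2' - r1.length = i2' := by omega
        rw [h3, List.getElem?_eq_getElem hi2', hri2]
      rw [List.getElem?_eq_getElem hj] at h0
      exact Option.some.inj h0
    have huniq : ∀ (j : ℕ) (hj : j < π.length), π[j] = a1 → j = i1 ∨ j = n + i2' := by
      intro j hj hja
      have hja' : π[j]? = some a1 := by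
        rw [List.getElem?_eq_getElem hj, hja]
      rcases Nat.lt_or_ge j n with hjn | hjn
      · left
        have hjr1 : j < r1.length := by omega
        rw [hπ, List.getElem?_append_left hjr1, List.getElem?_eq_getElem hjr1] at hja'
        have h4 : r1[j] = a1 := Option.some.inj hja'
        exact (List.Nodup.getElem_inj_iff hndr1).mp (h4.trans hri1.symm)
      · right
        have hjr2 : j - r1.length < r2.length := by
          rw [hπlen] at hj; omega
        rw [hπ, List.getElem?_append_right (by omega),
          List.getElem?_eq_getElem hjr2] at hja'
        have h4 : r2[j - r1.length] = a1 := Option.some.inj hja'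
        have h5 := (List.Nodup.getElem_inj_iff hndr2).mp (h4.trans hri2.symm)
        omega
    have hs1L : (a1, s1) ∈ seqAlloc P π Finset.univ := (hmem s1).mpr (Or.inl rfl)
    have hs2L : (a1, s2) ∈ seqAlloc P π Finset.univ := (hmem s2).mpr (Or.inr rfl)
    obtain ⟨k1, hk1, hLk1⟩ := List.mem_iff_getElem.mp hs1L
    obtain ⟨k2, hk2, hLk2⟩ := List.mem_iff_getElem.mp hs2L
    have hπk1 : k1 = i1 ∨ k1 = n + i2' := by
      refine huniq k1 (by omega) ?_
      rw [← hfst_at k1 hk1 (by omega), hLk1]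
    have hπk2 : k2 = i1 ∨ k2 = n + i2' := by
      refine huniq k2 (by omega) ?_
      rw [← hfst_at k2 hk2 (by omega), hLk2]
    have hi1L : i1 < (seqAlloc P π Finset.univ).length := by omega
    have hfst1 : (seqAlloc P π Finset.univ)[i1].1 = a1 := by
      rw [hfst_at i1 hi1L (by omega)]; exact hπi1 (by omega)
    have hfav1 : (seqAlloc P π Finset.univ)[i1].2 = s1 := by
      have hnotake : s1 ∉ (List.map Prod.snd (seqAlloc P π Finset.univ)).take i1 := by
        intro hmem'
        obtain ⟨l, hl, hlL, hls⟩ := htake s1 i1 hmem'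
        have hlk1 : l = k1 := hsnd_inj l k1 hlL hk1 (by rw [hls, hLk1])
        rcases hπk1 with h | h <;> omega
      have h5 := seqAlloc_pick_best P π Finset.univ i1 hi1L s1 (Finset.mem_univ _) hnotake
      rw [hfst1] at h5
      exact Lhelp.le_antisymm (P a1) (hs1 _) h5
    have hk1i1 : k1 = i1 := by
      refine hsnd_inj k1 i1 hk1 hi1L ?_
      rw [hLk1, hfav1]
    have hk2i2 : k2 = n + i2' := by
      rcases hπk2 with h | h
      · exfalso
        have e1 : k1 = k2 := by omega
        have q1 : (seqAlloc P π Finset.univ)[k1]? = some (a1, s1) := by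
          rw [List.getElem?_eq_getElem hk1, hLk1]
        have q2 : (seqAlloc P π Finset.univ)[k2]? = some (a1, s2) := by
          rw [List.getElem?_eq_getElem hk2, hLk2]
        rw [e1, q2] at q1
        exact hs2ne (congrArg Prod.snd (Option.some.inj q1))
      · exact h
    have hs2no : ∀ (j : ℕ) (hj : j < (seqAlloc P π Finset.univ).length),
        (seqAlloc P π Finset.univ)[j].2 = s2 → j = n + i2' := by
      intro j hj he
      have := hsnd_inj j k2 hj hk2 (by rw [he, hLk2])
      omega
    -- the witness function
    refine ⟨fun a => ((seqAlloc P π Finset.univ).getD (r1.idxOf a) (a1, s1)).2, ?_, ?_⟩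
    · -- injectivity
      intro a ha b hb he
      have har1 : a ∈ r1 := List.count_pos_iff.mp (by rw [hr1.2 a]; omega)
      have hbr1 : b ∈ r1 := List.count_pos_iff.mp (by rw [hr1.2 b]; omega)
      have hja : r1.idxOf a < r1.length := List.idxOf_lt_length_iff.mpr har1
      have hjb : r1.idxOf b < r1.length := List.idxOf_lt_length_iff.mpr hbr1
      have hjaL : r1.idxOf a < (seqAlloc P π Finset.univ).length := by omega
      have hjbL : r1.idxOf b < (seqAlloc P π Finset.univ).length := by omega
      simp only [List.getD_eq_getElem _ _ hjaL, List.getD_eq_getElem _ _ hjbL] at he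
      have hij : r1.idxOf a = r1.idxOf b := hsnd_inj _ _ hjaL hjbL he
      have e1 : r1[r1.idxOf a]? = some a := by
        rw [List.getElem?_eq_getElem hja, List.getElem_idxOf hja]
      have e2 : r1[r1.idxOf b]? = some b := by
        rw [List.getElem?_eq_getElem hjb, List.getElem_idxOf hjb]
      rw [hij, e2] at e1
      exact (Option.some.inj e1).symm
    · -- the two properties
      intro a ha
      have har1 : a ∈ r1 := List.count_pos_iff.mp (by rw [hr1.2 a]; omega)
      have hja : r1.idxOf a < r1.length := List.idxOf_lt_length_iff.mpr har1
      have hjaL : r1.idxOf a < (seqAlloc P π Finset.univ).length := by omega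
      have hfa : ((seqAlloc P π Finset.univ).getD (r1.idxOf a) (a1, s1)).2 =
          (seqAlloc P π Finset.univ)[r1.idxOf a].2 := by
        rw [List.getD_eq_getElem _ _ hjaL]
      have hfsta : (seqAlloc P π Finset.univ)[r1.idxOf a].1 = a := by
        rw [hfst_at _ hjaL (by omega)]
        have h0 : π[r1.idxOf a]? = some a := by
          rw [hπ, List.getElem?_append_left hja, List.getElem?_eq_getElem hja,
            List.getElem_idxOf hja]
        rw [List.getElem?_eq_getElem (by omega : r1.idxOf a < π.length)] at h0
        exact Option.some.inj h0
      have hne : ((seqAlloc P π Finset.univ).getD (r1.idxOf a) (a1, s1)).2 ≠ s1 := by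
        rw [hfa]
        intro he
        have h6 : r1.idxOf a = i1 := hsnd_inj _ _ hjaL hi1L (by rw [he, hfav1])
        have e1 : (seqAlloc P π Finset.univ)[r1.idxOf a]? = some ((seqAlloc P π Finset.univ)[i1]) := by
          rw [h6, List.getElem?_eq_getElem hi1L]
        rw [List.getElem?_eq_getElem hjaL] at e1
        have e2 := Option.some.inj e1
        have e3 : a = a1 := by
          rw [← hfsta, ← hfst1, e2]
        exact ha e3
      have hlt : (P a).lt s2 (((seqAlloc P π Finset.univ).getD (r1.idxOf a) (a1, s1)).2) := by
        rw [hfa]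
        have hnotake : s2 ∉ (List.map Prod.snd (seqAlloc P π Finset.univ)).take (r1.idxOf a) := by
          intro hmem'
          obtain ⟨l, hl, hlL, hls⟩ := htake s2 _ hmem'
          have := hs2no l hlL hls
          omega
        have h5 := seqAlloc_pick_best P π Finset.univ _ hjaL s2 (Finset.mem_univ _) hnotake
        rw [hfsta] at h5
        refine Lhelp.lt_of_le_of_ne (P a) h5 ?_
        intro he
        have := hs2no _ hjaL he.symm
        omega
      exact ⟨hne, hlt⟩
  · -- backward direction
    rintro ⟨f, hinj, hprop⟩
    have hcardu : (Finset.univ : Finset ι).card = 2 * n := by rw [Finset.card_univ, hcard]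
    have hUne : (Finset.univ : Finset ι).Nonempty := ⟨s2, Finset.mem_univ _⟩
    have hfavU : favorite (P a1) Finset.univ hUne = s1 :=
      Lhelp.le_antisymm (P a1) (hs1 _) (le_favorite _ _ _ _ (Finset.mem_univ s1))
    have hcardA : (Finset.univ.erase a1 : Finset (Fin n)).card = n - 1 := by
      rw [Finset.card_erase_of_mem (Finset.mem_univ _), Finset.card_univ, Fintype.card_fin]
    obtain ⟨σ, hnd, htf, hpick⟩ := exists_good_order P s2 (n - 1)
      (Finset.univ.erase a1) (Finset.univ.erase s1) hcardA
      (by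
        rw [hcardA, Finset.card_erase_of_mem (Finset.mem_univ _), hcardu]
        omega)
      (Finset.mem_erase.mpr ⟨hs2ne, Finset.mem_univ _⟩)
      ⟨f, by
        intro x hx y hy he
        simp only [Finset.coe_erase, Finset.coe_univ, Set.mem_diff, Set.mem_singleton_iff] at hx hy
        exact hinj hx.2 hy.2 he,
       fun a haA => by
        have haa1 : a ≠ a1 := (Finset.mem_erase.mp haA).1
        exact ⟨Finset.mem_erase.mpr ⟨(hprop a haa1).1, Finset.mem_univ _⟩, (hprop a haa1).2⟩⟩
    have hσlen : σ.length = n - 1 := by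
      rw [← List.toFinset_card_of_nodup hnd, htf, hcardA]
    have ha1σ : a1 ∉ σ := by
      intro hmem'
      have : a1 ∈ Finset.univ.erase a1 := htf ▸ List.mem_toFinset.mpr hmem'
      exact (Finset.mem_erase.mp this).1 rfl
    have hρlen : (a1 :: σ).length = n := by
      simp only [List.length_cons, hσlen]; omega
    refine ⟨(a1 :: σ) ++ (a1 :: σ), ⟨[a1 :: σ, a1 :: σ], rfl, ?_, by simp⟩, ?_⟩
    · intro r hr
      have hreq : r = a1 :: σ := by
        rcases List.mem_cons.mp hr with h | h
        · exact h
        · simpa using h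
      subst hreq
      refine ⟨hρlen, ?_⟩
      intro a
      by_cases haa : a = a1
      · subst haa
        rw [List.count_cons_self, List.count_eq_zero.mpr ha1σ]
      · rw [List.count_cons_of_ne (Ne.symm haa)]
        refine List.count_eq_one_of_mem hnd ?_
        have : a ∈ Finset.univ.erase a1 := Finset.mem_erase.mpr ⟨haa, Finset.mem_univ _⟩
        rw [← htf] at this
        exact List.mem_toFinset.mp this
    · -- receives computation
      have hρcard : (a1 :: σ).length ≤ (Finset.univ : Finset ι).card := by
        rw [hρlen, hcardu]; omega
      have hsplit := seqAlloc_append P (a1 :: σ) (a1 :: σ) Finset.univ hρcard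
      have hcons1 : seqAlloc P (a1 :: σ) Finset.univ =
          (a1, s1) :: seqAlloc P σ (Finset.univ.erase s1) := by
        rw [seqAlloc_cons P a1 σ Finset.univ hUne, hfavU]
      set A := seqAlloc P σ (Finset.univ.erase s1) with hA
      set S₂ := Finset.univ \ ((List.map Prod.snd ((a1, s1) :: A)).toFinset) with hS₂
      have hs2S₂ : s2 ∈ S₂ := by
        rw [hS₂]
        refine Finset.mem_sdiff.mpr ⟨Finset.mem_univ _, ?_⟩
        intro hmem'
        simp only [List.map_cons, List.toFinset_cons, Finset.mem_insert,
          List.mem_toFinset, List.mem_map] at hmem'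
        rcases hmem' with h | ⟨p, hp, hp2⟩
        · exact hs2ne h
        · exact hpick p hp hp2
      have hS₂ne : S₂.Nonempty := ⟨s2, hs2S₂⟩
      have hfavS₂ : favorite (P a1) S₂ hS₂ne = s2 := by
        refine Lhelp.le_antisymm (P a1) ?_ (le_favorite _ _ _ _ hs2S₂)
        have hs1not : ∀ x : ι, x ∈ S₂ → x ≠ s1 := by
          intro x hx he
          rw [hS₂] at hx
          refine (Finset.mem_sdiff.mp hx).2 ?_
          rw [he]
          simp
        exact hs2 _ (hs1not _ (favorite_mem _ _ _))
      have hcons2 : seqAlloc P (a1 :: σ) S₂ =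
          (a1, s2) :: seqAlloc P σ (S₂.erase s2) := by
        rw [seqAlloc_cons P a1 σ S₂ hS₂ne, hfavS₂]
      rw [receives]
      ext o
      simp only [Finset.mem_filter, Finset.mem_univ, true_and, Finset.mem_insert,
        Finset.mem_singleton]
      rw [hsplit, hcons1, ← hS₂, hcons2]
      constructor
      · intro hmem'
        rcases List.mem_append.mp hmem' with h | h
        · rcases List.mem_cons.mp h with h | h
          · left; exact (Prod.mk.injEq _ _ _ _ ▸ h).2
          · exfalso
            have := seqAlloc_fst_mem P σ _ _ h
            exact ha1σ this
        · rcases List.mem_cons.mp h with h | h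
          · right; exact (Prod.mk.injEq _ _ _ _ ▸ h).2
          · exfalso
            have := seqAlloc_fst_mem P σ _ _ h
            exact ha1σ this
      · intro ho
        rcases ho with rfl | rfl
        · exact List.mem_append.mpr (Or.inl List.mem_cons_self)
        · exact List.mem_append.mpr (Or.inr List.mem_cons_self)
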